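/- arXiv:2008.01680 — 2 statements merged into one kernel-verified Lean document; each statement's English description precedes it below -/
import Mathlib

section
/- In the fixed-game matching setting with n ≥ 2, assume S and T are nonempty convex subsets of real topological vector spaces, U and V are continuous, U(·,t) is q-concave for every t ∈ T, and V(s,·) is q-concave for every s ∈ S. Let (s,t) ∈ S×T be Pareto optimal in G and let μ be any matching. Then the matching profile in which every matched couple plays (s,t) (i.e., x_i = s for all i and y_j = t for all j) is externally stable and internally stable. -/
/-- `f` is q-concave on the convex set `C`: whenever `f s ≥ c` and `f s' > c`,
all strict convex combinations of `s` and `s'` have value `> c`. -/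
def QConcaveOn {E : Type*} [AddCommGroup E] [Module ℝ E] (C : Set E) (f : E → ℝ) : Prop :=
  ∀ s ∈ C, ∀ s' ∈ C, ∀ c : ℝ, c ≤ f s → c < f s' →
    ∀ t : ℝ, 0 < t → t < 1 → c < f ((1 - t) • s + t • s')

/-- A profile `(s,t)` is Pareto optimal in the fixed game over `S × T`. -/
def ParetoOptimalFixed {E F : Type*} (S : Set E) (T : Set F) (U V : E → F → ℝ)
    (s : E) (t : F) : Prop :=
  ¬ ∃ s' ∈ S, ∃ t' ∈ T, U s t ≤ U s' t' ∧ V s t ≤ V s' t' ∧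
      (U s t < U s' t' ∨ V s t < V s' t')

/-- External stability in the fixed-game matching setting. -/
def ExtStableFixed {E F : Type*} (S : Set E) (T : Set F) (U V : E → F → ℝ) {n : ℕ}
    (μ : Equiv.Perm (Fin n)) (x : Fin n → E) (y : Fin n → F) : Prop :=
  ∀ i j : Fin n, μ i ≠ j → ∀ s ∈ S, ∀ t ∈ T,
    ¬ (U (x i) (y (μ i)) < U s t ∧ V (x (μ.symm j)) (y j) < V s t)

/-- Internal stability in the fixed-game matching setting: a profitable unilateral
deviation of a matched agent necessarily breaks external stability. -/
def IntStableFixed {E F : Type*} (S : Set E) (T : Set F) (U V : E → F → ℝ) {n : ℕ}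
    (μ : Equiv.Perm (Fin n)) (x : Fin n → E) (y : Fin n → F) : Prop :=
  (∀ i : Fin n, ∀ s ∈ S, U (x i) (y (μ i)) < U s (y (μ i)) →
    ¬ ExtStableFixed S T U V μ (Function.update x i s) y) ∧
  (∀ j : Fin n, ∀ t ∈ T, V (x (μ.symm j)) (y j) < V (x (μ.symm j)) t →
    ¬ ExtStableFixed S T U V μ x (Function.update y j t))


private lemma exists_Ioo_lt' {g : ℝ → ℝ} (hg : ContinuousOn g (Set.Icc 0 1)) {c : ℝ} (h : c < g 0) :
    ∃ l ∈ Set.Ioo (0:ℝ) 1, c < g l := by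
  have hne : (nhdsWithin (0:ℝ) (Set.Ioo 0 1)).NeBot := by
    rw [← mem_closure_iff_nhdsWithin_neBot, closure_Ioo (by norm_num : (0:ℝ) ≠ 1)]
    constructor <;> norm_num
  have hc : ContinuousWithinAt g (Set.Ioo 0 1) 0 :=
    (hg 0 (by constructor <;> norm_num)).mono Set.Ioo_subset_Icc_self
  have h1 : ∀ᶠ l in nhdsWithin (0:ℝ) (Set.Ioo 0 1), c < g l := hc (Ioi_mem_nhds h)
  have h2 : ∀ᶠ l in nhdsWithin (0:ℝ) (Set.Ioo 0 1), l ∈ Set.Ioo (0:ℝ) 1 :=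
    self_mem_nhdsWithin
  obtain ⟨l, hl1, hl2⟩ := (h1.and h2).exists
  exact ⟨l, hl2, hl1⟩

/-- If `(s,t)` is Pareto optimal in the fixed game `G`, then for any matching `μ`
the matching profile where every couple plays `(s,t)` is externally and internally
stable. -/
theorem pareto_profile_is_stable
    {E F : Type*} [AddCommGroup E] [Module ℝ E] [TopologicalSpace E]
    [IsTopologicalAddGroup E] [ContinuousSMul ℝ E]
    [AddCommGroup F] [Module ℝ F] [TopologicalSpace F]
    [IsTopologicalAddGroup F] [ContinuousSMul ℝ F]
    (S : Set E) (T : Set F) (hSc : Convex ℝ S) (hTc : Convex ℝ T)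
    (hSne : S.Nonempty) (hTne : T.Nonempty)
    (U V : E → F → ℝ)
    (hUcont : ContinuousOn (fun p : E × F => U p.1 p.2) (S ×ˢ T))
    (hVcont : ContinuousOn (fun p : E × F => V p.1 p.2) (S ×ˢ T))
    (hUq : ∀ t ∈ T, QConcaveOn S (fun s => U s t))
    (hVq : ∀ s ∈ S, QConcaveOn T (fun t => V s t))
    (n : ℕ) (hn : 2 ≤ n) (μ : Equiv.Perm (Fin n))
    (s : E) (t : F) (hs : s ∈ S) (ht : t ∈ T)
    (hPO : ParetoOptimalFixed S T U V s t) :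
    ExtStableFixed S T U V μ (fun _ => s) (fun _ => t) ∧
    IntStableFixed S T U V μ (fun _ => s) (fun _ => t) := by
  classical
  -- Pareto consequences
  have hPU : ∀ s' ∈ S, U s t < U s' t → V s' t < V s t := by
    intro s' hs' h
    by_contra hcon
    push_neg at hcon
    exact hPO ⟨s', hs', t, ht, h.le, hcon, Or.inl h⟩
  have hPV : ∀ t' ∈ T, V s t < V s t' → U s t' < U s t := by
    intro t' ht' h
    by_contra hcon
    push_neg at hcon
    exact hPO ⟨s, hs, t', ht', hcon, h.le, Or.inr h⟩
  have hext : ExtStableFixed S T U V μ (fun _ => s) (fun _ => t) := by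
    intro i j hij s'' hs'' t'' ht'' ⟨h1, h2⟩
    exact hPO ⟨s'', hs'', t'', ht'', h1.le, h2.le, Or.inl h1⟩
  refine ⟨hext, ?_, ?_⟩
  · -- men's deviations
    intro i s' hs' hU hExt
    have hV' : V s' t < V s t := hPU s' hs' hU
    -- path in S
    have hpath : ∀ l ∈ Set.Icc (0:ℝ) 1, (1 - l) • s + l • s' ∈ S := fun l hl =>
      hSc hs hs' (by linarith [hl.2]) hl.1 (by ring)
    have hgc : ContinuousOn (fun l : ℝ => V ((1 - l) • s + l • s') t) (Set.Icc 0 1) := by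
      have hp : Continuous (fun l : ℝ => (((1 - l) • s + l • s', t) : E × F)) := by
        exact (((continuous_const.sub continuous_id).smul continuous_const).add
          (continuous_id.smul continuous_const)).prodMk continuous_const
      exact hVcont.comp hp.continuousOn (fun l hl => ⟨hpath l hl, ht⟩)
    have hg0 : V s' t < (fun l : ℝ => V ((1 - l) • s + l • s') t) 0 := by
      simpa using hV'
    obtain ⟨l, hl, hgl⟩ := exists_Ioo_lt' hgc hg0
    set sl := (1 - l) • s + l • s' with hsl
    have hslS : sl ∈ S := hpath l (Set.mem_Icc_of_Ioo hl)
    have hUl : U s t < U sl t := hUq t ht s hs s' hs' (U s t) le_rfl hU l hl.1 hl.2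
    -- pick i' ≠ i
    have : Nontrivial (Fin n) := Fin.nontrivial_iff_two_le.mpr hn
    obtain ⟨i', hi'⟩ := exists_ne i
    have hne : μ i' ≠ μ i := fun h => hi' (μ.injective h)
    have := hExt i' (μ i) hne sl hslS t ht
    apply this
    constructor
    · simpa [Function.update_of_ne hi'] using hUl
    · rw [Equiv.symm_apply_apply]; simpa using hgl
  · -- women's deviations
    intro j t' ht' hV hExt
    have hU' : U s t' < U s t := hPV t' ht' hV
    have hpath : ∀ l ∈ Set.Icc (0:ℝ) 1, (1 - l) • t + l • t' ∈ T := fun l hl =>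
      hTc ht ht' (by linarith [hl.2]) hl.1 (by ring)
    have hgc : ContinuousOn (fun l : ℝ => U s ((1 - l) • t + l • t')) (Set.Icc 0 1) := by
      have hp : Continuous (fun l : ℝ => ((s, (1 - l) • t + l • t') : E × F)) := by
        exact continuous_const.prodMk (((continuous_const.sub continuous_id).smul
          continuous_const).add (continuous_id.smul continuous_const))
      exact hUcont.comp hp.continuousOn (fun l hl => ⟨hs, hpath l hl⟩)
    have hg0 : U s t' < (fun l : ℝ => U s ((1 - l) • t + l • t')) 0 := by
      simpa using hU'
    obtain ⟨l, hl, hgl⟩ := exists_Ioo_lt' hgc hg0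
    set tl := (1 - l) • t + l • t' with htl
    have htlT : tl ∈ T := hpath l (Set.mem_Icc_of_Ioo hl)
    have hVl : V s t < V s tl := hVq s hs t ht t' ht' (V s t) le_rfl hV l hl.1 hl.2
    have : Nontrivial (Fin n) := Fin.nontrivial_iff_two_le.mpr hn
    obtain ⟨j', hj'⟩ := exists_ne j
    have hne : μ (μ.symm j) ≠ j' := by
      rw [Equiv.apply_symm_apply]; exact fun h => hj' h.symm
    have := hExt (μ.symm j) j' hne s hs tl htlT
    apply this
    constructor
    · rw [Equiv.apply_symm_apply]; simpa using hgl
    · simpa [Function.update_of_ne hj'] using hVl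
end

section
/- In the fixed-game matching setting, assume S and T are nonempty convex subsets of real topological vector spaces, U and V are continuous, U(·,t) is q-concave for every t ∈ T, and V(s,·) is q-concave for every s ∈ S. If (μ,x,y) is an externally stable and internally stable matching profile, then there exists i₀ ∈ M such that for every i ∈ M with i ≠ i₀, the profile (x_i, y_{μ_i}) played by the couple (i,μ_i) is not strictly Pareto dominated in G. -/
/-- A profile `(s,t)` is strictly Pareto dominated in the fixed game over `S × T`. -/
def StrictlyParetoDominated {E F : Type*} (S : Set E) (T : Set F) (U V : E → F → ℝ)
    (s : E) (t : F) : Prop :=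
  ∃ s' ∈ S, ∃ t' ∈ T, U s t < U s' t' ∧ V s t < V s' t'

/-- If `(μ,x,y)` is an externally and internally stable matching profile of the
fixed-game matching setting, then all matched couples, except at most one, play a
profile that is not strictly Pareto dominated. -/
theorem stable_implies_almost_all_pareto
    {E F : Type*} [AddCommGroup E] [Module ℝ E] [TopologicalSpace E]
    [IsTopologicalAddGroup E] [ContinuousSMul ℝ E]
    [AddCommGroup F] [Module ℝ F] [TopologicalSpace F]
    [IsTopologicalAddGroup F] [ContinuousSMul ℝ F]
    (S : Set E) (T : Set F) (hSc : Convex ℝ S) (hTc : Convex ℝ T)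
    (hSne : S.Nonempty) (hTne : T.Nonempty)
    (U V : E → F → ℝ)
    (hUcont : ContinuousOn (fun p : E × F => U p.1 p.2) (S ×ˢ T))
    (hVcont : ContinuousOn (fun p : E × F => V p.1 p.2) (S ×ˢ T))
    (hUq : ∀ t ∈ T, QConcaveOn S (fun s => U s t))
    (hVq : ∀ s ∈ S, QConcaveOn T (fun t => V s t))
    (n : ℕ) (hn : 2 ≤ n) (μ : Equiv.Perm (Fin n))
    (x : Fin n → E) (y : Fin n → F)
    (hx : ∀ i, x i ∈ S) (hy : ∀ j, y j ∈ T)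
    (hext : ExtStableFixed S T U V μ x y)
    (hint : IntStableFixed S T U V μ x y) :
    ∃ i₀ : Fin n, ∀ i : Fin n, i ≠ i₀ →
      ¬ StrictlyParetoDominated S T U V (x i) (y (μ i)) := by
  by_cases h : ∃ i, StrictlyParetoDominated S T U V (x i) (y (μ i))
  · obtain ⟨i₀, hi₀⟩ := h
    refine ⟨i₀, fun i hi hdom => ?_⟩
    obtain ⟨s, hs, t, ht, hU, hV⟩ := hdom
    obtain ⟨s', hs', t', ht', hU', hV'⟩ := hi₀
    have h1 := hext i (μ i₀) (fun hc => hi (μ.injective hc)) s hs t ht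
    have h2 := hext i₀ (μ i) (fun hc => hi (μ.injective hc).symm) s' hs' t' ht'
    rw [Equiv.symm_apply_apply] at h1 h2
    push_neg at h1 h2
    have := h1 hU
    have := h2 hU'
    linarith
  · push_neg at h
    exact ⟨⟨0, by omega⟩, fun i _ => h i⟩
end
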